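/- arXiv:2505.07992 — 3 statements merged into one kernel-verified Lean document; each statement's English description precedes it below -/
import Mathlib

section
/- Let G be a connected bipartite graph and xy an edge of G. Let F_xy be the set of edges of G that are in relation Θ to xy, where two edges x₁x₂ and y₁y₂ are in relation Θ if d(x₁,y₁) + d(x₂,y₂) ≠ d(x₁,y₂) + d(x₂,y₁). Then the spanning subgraph G − F_xy has exactly two connected components, namely the subgraphs induced by W_xy and by W_yx. -/
section Aux

variable {V : Type*} {G : SimpleGraph V}

private lemma walk_parity (c : G.Coloring (ZMod 2)) {a b : V} (p : G.Walk a b) :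
    (p.length : ZMod 2) = c b - c a := by
  induction p with
  | nil => simp
  | @cons u v w h p ih =>
    have hne : c u ≠ c v := c.valid h
    have h1 : c v - c u = 1 := by
      have key : ∀ s t : ZMod 2, s ≠ t → t - s = 1 := by decide
      exact key _ _ hne
    have : ((SimpleGraph.Walk.cons h p).length : ℕ) = p.length + 1 := by simp
    push_cast [this]
    rw [ih]
    rw [show c w - c u = (c w - c v) + (c v - c u) by ring, h1]

private lemma dist_parity (hconn : G.Connected) (c : G.Coloring (ZMod 2)) (a b : V) :
    ((G.dist a b : ℕ) : ZMod 2) = c b - c a := by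
  obtain ⟨p, hp⟩ := hconn.exists_walk_length_eq_dist a b
  rw [← hp, walk_parity c p]

/-- For adjacent a b and any w, distances to w differ by exactly one. -/
private lemma adj_step (hconn : G.Connected) (c : G.Coloring (ZMod 2))
    {a b : V} (hab : G.Adj a b) (w : V) :
    G.dist a w = G.dist b w + 1 ∨ G.dist b w = G.dist a w + 1 := by
  have hne : G.dist a w ≠ G.dist b w := by
    intro h
    have h1 := dist_parity hconn c a w
    have h2 := dist_parity hconn c b w
    rw [h, h2] at h1
    exact c.valid hab (sub_right_inj.mp h1).symm
  have hd1 : G.dist a b = 1 := by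
    refine le_antisymm ?_ ?_
    · have := SimpleGraph.dist_le hab.toWalk
      simpa using this
    · exact Nat.one_le_iff_ne_zero.mpr (by
        rw [SimpleGraph.dist_ne_zero_iff_ne_and_reachable]
        exact ⟨hab.ne, hab.reachable⟩)
  have t1 : G.dist a w ≤ G.dist a b + G.dist b w := hconn.dist_triangle
  have t2 : G.dist b w ≤ G.dist b a + G.dist a w := hconn.dist_triangle
  have hd2 : G.dist b a = 1 := by rw [SimpleGraph.dist_comm]; exact hd1
  omega

/-- A vertex on the x-side is reachable to x in the deleted graph. -/
private lemma reach_side (hconn : G.Connected) (c : G.Coloring (ZMod 2))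
    {x y : V} (hxy : G.Adj x y) (F : Set (Sym2 V))
    (hF : F = {e | ∃ a b : V, e = s(a, b) ∧ G.Adj a b ∧
      G.dist a x + G.dist b y ≠ G.dist a y + G.dist b x}) :
    ∀ n (u : V), G.dist u x = n → G.dist u x < G.dist u y →
      (G.deleteEdges F).Reachable u x := by
  intro n
  induction n using Nat.strong_induction_on with
  | _ n ih =>
    intro u hdn hu
    rcases Nat.eq_zero_or_pos n with h0 | hpos
    · have : u = x := by
        rw [h0] at hdn
        exact (hconn.dist_eq_zero_iff).mp hdn
      exact this ▸ SimpleGraph.Reachable.refl _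
    · obtain ⟨p, hp⟩ := hconn.exists_walk_length_eq_dist u x
      cases p with
      | nil =>
        exfalso
        simp only [SimpleGraph.Walk.length_nil] at hp
        omega
      | @cons _ w _ h q =>
        -- h : G.Adj u w, q : walk w x
        have hwx : G.dist w x + 1 = G.dist u x := by
          have hle : G.dist w x ≤ q.length := SimpleGraph.dist_le q
          have hlen : q.length + 1 = G.dist u x := by
            simpa [SimpleGraph.Walk.length_cons] using hp
          have := adj_step hconn c h x
          omega
        -- u's distance to y
        have huy : G.dist u y = G.dist u x + 1 := by
          have := adj_step hconn c hxy u
          rw [SimpleGraph.dist_comm (u := x), SimpleGraph.dist_comm (u := y)] at this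
          omega
        have hwy : G.dist w x < G.dist w y := by
          have t : G.dist u y ≤ G.dist u w + G.dist w y := hconn.dist_triangle
          have hduw : G.dist u w = 1 := by
            have := adj_step hconn c h w
            simp only [SimpleGraph.dist_self] at this
            omega
          omega
        have hwyE : G.dist w y = G.dist w x + 1 := by
          have := adj_step hconn c hxy w
          rw [SimpleGraph.dist_comm (u := x), SimpleGraph.dist_comm (u := y)] at this
          omega
        -- the edge u-w is not in F
        have hnotF : s(u, w) ∉ F := by
          rw [hF]
          rintro ⟨a, b, he, -, hne⟩
          rw [Sym2.eq_iff] at he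
          rcases he with ⟨rfl, rfl⟩ | ⟨rfl, rfl⟩ <;> omega
        have hadj : (G.deleteEdges F).Adj u w := by
          rw [SimpleGraph.deleteEdges_adj]
          exact ⟨h, hnotF⟩
        exact hadj.reachable.trans
          (ih (G.dist w x) (by omega) w rfl (by omega))

end Aux

/-- In a connected bipartite graph G with an edge xy, deleting the
Θ-class F_xy of the edge xy leaves exactly two connected components, namely the
subgraphs induced by W_xy and W_yx: two vertices are reachable in G − F_xy iff
they both lie in W_xy or both lie in W_yx. -/
theorem stmt1 {V : Type*} (G : SimpleGraph V) (hconn : G.Connected)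
    (hbip : G.Colorable 2) (x y : V) (hxy : G.Adj x y)
    (F : Set (Sym2 V))
    (hF : F = {e | ∃ a b : V, e = s(a, b) ∧ G.Adj a b ∧
      G.dist a x + G.dist b y ≠ G.dist a y + G.dist b x}) :
    ∀ u v : V, (G.deleteEdges F).Reachable u v ↔
      ((G.dist u x < G.dist u y ∧ G.dist v x < G.dist v y) ∨
       (G.dist u y < G.dist u x ∧ G.dist v y < G.dist v x)) := by
  obtain ⟨c⟩ := hbip
  have c' : G.Coloring (ZMod 2) := c
  -- every vertex is strictly on one side
  have hside : ∀ u : V, G.dist u x ≠ G.dist u y := by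
    intro u
    have := adj_step hconn c' hxy u
    rw [SimpleGraph.dist_comm (u := x), SimpleGraph.dist_comm (u := y)] at this
    omega
  -- F with roles of x and y swapped
  have hF' : F = {e | ∃ a b : V, e = s(a, b) ∧ G.Adj a b ∧
      G.dist a y + G.dist b x ≠ G.dist a x + G.dist b y} := by
    rw [hF]
    ext e
    constructor
    · rintro ⟨a, b, he, hadj, hne⟩; exact ⟨a, b, he, hadj, by omega⟩
    · rintro ⟨a, b, he, hadj, hne⟩; exact ⟨a, b, he, hadj, by omega⟩
  intro u v
  constructor
  · -- reachable implies same side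
    intro hr
    obtain ⟨p⟩ := hr
    have key : ∀ {a b : V} (_ : (G.deleteEdges F).Walk a b),
        (G.dist a x < G.dist a y ↔ G.dist b x < G.dist b y) := by
      intro a b p
      induction p with
      | nil => rfl
      | @cons s t r h q ih =>
        rw [SimpleGraph.deleteEdges_adj] at h
        obtain ⟨hadj, hnF⟩ := h
        have heq : G.dist s x + G.dist t y = G.dist s y + G.dist t x := by
          by_contra hne
          exact hnF (by rw [hF]; exact ⟨s, t, rfl, hadj, hne⟩)
        have h1 := hside s
        have h2 := hside t
        rw [← ih]
        omega
    have := key p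
    have h1 := hside u
    have h2 := hside v
    omega
  · rintro (⟨hu, hv⟩ | ⟨hu, hv⟩)
    · exact (reach_side hconn c' hxy F hF _ u rfl hu).trans
        (reach_side hconn c' hxy F hF _ v rfl hv).symm
    · exact (reach_side hconn c' hxy.symm F hF' _ u rfl hu).trans
        (reach_side hconn c' hxy.symm F hF' _ v rfl hv).symm
end

section
/- Let X ⊆ {0,1}^n and let Q_n(X) be the daisy cube, i.e., the subgraph of Q_n induced by the downward closure {u ∈ {0,1}^n : u ≤ x for some x ∈ X} under the coordinatewise partial order. Then Q_n(X) is an isometric subgraph of Q_n: for any two vertices u, v of Q_n(X), the distance between u and v within Q_n(X) equals their Hamming distance. -/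
/-- The hypercube Q_n: vertices are binary strings of length n,
two vertices are adjacent iff they differ in exactly one position. -/
def Qcube (n : ℕ) : SimpleGraph (Fin n → Bool) where
  Adj u v := hammingDist u v = 1
  symm := by
    constructor
    intro u v h
    replace h : hammingDist u v = 1 := h
    show hammingDist v u = 1
    rwa [hammingDist_comm]
  loopless := by
    constructor
    intro u h
    simp [hammingDist_self] at h

lemma flip_adj {n : ℕ} {u v : Fin n → Bool} {i : Fin n} (h : u i ≠ v i) :
    hammingDist u (Function.update u i (v i)) = 1 := by
  unfold hammingDist
  rw [Finset.card_eq_one]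
  refine ⟨i, ?_⟩
  ext j
  simp only [Finset.mem_filter, Finset.mem_univ, true_and, Finset.mem_singleton]
  constructor
  · intro hj
    by_contra hne
    simp [Function.update_apply, hne] at hj
  · rintro rfl
    simpa [Function.update_apply]

lemma flip_dist {n : ℕ} {u v : Fin n → Bool} {i : Fin n} (h : u i ≠ v i) :
    hammingDist (Function.update u i (v i)) v + 1 = hammingDist u v := by
  unfold hammingDist
  have hset : Finset.filter (fun j => Function.update u i (v i) j ≠ v j) Finset.univ
      = Finset.filter (fun j => u j ≠ v j) Finset.univ \ {i} := by
    ext j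
    by_cases hji : j = i
    · subst hji; simp [Function.update_apply]
    · simp [Function.update_apply, hji]
  rw [hset, Finset.card_sdiff_of_subset (by simpa using h)]
  have hpos : 0 < (Finset.filter (fun j => u j ≠ v j) Finset.univ).card := by
    rw [Finset.card_pos]
    exact ⟨i, by simpa using h⟩
  simp only [Finset.card_singleton]
  omega

lemma walk_len {n : ℕ} {D : Set (Fin n → Bool)} :
    ∀ {u v : D} (p : ((Qcube n).induce D).Walk u v),
      hammingDist (u : Fin n → Bool) (v : Fin n → Bool) ≤ p.length := by
  intro u v p
  induction p with
  | nil => simp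
  | @cons a b c h q ih =>
    have h1 : hammingDist (a : Fin n → Bool) (b : Fin n → Bool) = 1 := h
    calc hammingDist (a : Fin n → Bool) (c : Fin n → Bool)
        ≤ hammingDist (a : Fin n → Bool) (b : Fin n → Bool)
          + hammingDist (b : Fin n → Bool) (c : Fin n → Bool) :=
          hammingDist_triangle _ _ _
    _ ≤ 1 + q.length := by rw [h1]; omega
    _ = (SimpleGraph.Walk.cons h q).length := by
          rw [SimpleGraph.Walk.length_cons]; omega

/-- The daisy cube Q_n(X), i.e. the subgraph of Q_n induced on the
downward closure D of X (coordinatewise order), is isometric in Q_n: the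
distance between two of its vertices equals their Hamming distance. -/
theorem stmt4 (n : ℕ) (X : Set (Fin n → Bool))
    (D : Set (Fin n → Bool)) (hD : D = {u | ∃ x ∈ X, u ≤ x}) :
    ∀ u v : D, ((Qcube n).induce D).dist u v =
      hammingDist (u : Fin n → Bool) (v : Fin n → Bool) := by
  have mem : ∀ y : Fin n → Bool, y ∈ D → ∃ x ∈ X, y ≤ x := by
    intro y hy; rwa [hD] at hy
  have key : ∀ (k : ℕ) (u v : D), hammingDist (u : Fin n → Bool) v = k →
      ∃ p : ((Qcube n).induce D).Walk u v, p.length = k := by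
    intro k
    induction k with
    | zero =>
      intro u v h
      have : (u : Fin n → Bool) = v := hammingDist_eq_zero.mp h
      have : u = v := Subtype.ext this
      subst this
      exact ⟨SimpleGraph.Walk.nil, rfl⟩
    | succ k ih =>
      intro u v h
      have hne : (u : Fin n → Bool) ≠ v := by
        intro he; rw [he, hammingDist_self] at h; omega
      obtain ⟨i, hine, hcase⟩ : ∃ i, (u : Fin n → Bool) i ≠ (v : Fin n → Bool) i ∧
          (((u : Fin n → Bool) i = true ∧ (v : Fin n → Bool) i = false) ∨
            ∀ j, (u : Fin n → Bool) j ≤ (v : Fin n → Bool) j) := by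
        by_cases hc : ∃ i, (u : Fin n → Bool) i = true ∧ (v : Fin n → Bool) i = false
        · obtain ⟨i, h1, h2⟩ := hc
          exact ⟨i, by simp [h1, h2], Or.inl ⟨h1, h2⟩⟩
        · push_neg at hc
          have hle : ∀ j, (u : Fin n → Bool) j ≤ (v : Fin n → Bool) j := by
            intro j
            cases hj : (u : Fin n → Bool) j with
            | false => simp
            | true => simp [eq_true_of_ne_false (hc j hj)]
          obtain ⟨i, hi⟩ : ∃ i, (u : Fin n → Bool) i ≠ (v : Fin n → Bool) i := by
            by_contra hcon
            push_neg at hcon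
            exact hne (funext hcon)
          exact ⟨i, hi, Or.inr hle⟩
      set w : Fin n → Bool := Function.update (u : Fin n → Bool) i ((v : Fin n → Bool) i)
        with hw
      have hwD : w ∈ D := by
        rw [hD]
        rcases hcase with ⟨h1, h2⟩ | hle
        · obtain ⟨x, hx, hux⟩ := mem _ u.2
          refine ⟨x, hx, fun j => ?_⟩
          by_cases hji : j = i
          · subst hji; simp [hw, Function.update_apply, h2]
          · rw [hw, Function.update_apply, if_neg hji]
            exact hux j
        · obtain ⟨x, hx, hvx⟩ := mem _ v.2
          refine ⟨x, hx, fun j => ?_⟩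
          by_cases hji : j = i
          · subst hji
            rw [hw, Function.update_apply, if_pos rfl]
            exact hvx j
          · rw [hw, Function.update_apply, if_neg hji]
            exact le_trans (hle j) (hvx j)
      have hadj : ((Qcube n).induce D).Adj u ⟨w, hwD⟩ := flip_adj hine
      have hdk : hammingDist w (v : Fin n → Bool) = k := by
        rw [hw]
        have := flip_dist hine
        omega
      obtain ⟨p, hp⟩ := ih ⟨w, hwD⟩ v hdk
      exact ⟨SimpleGraph.Walk.cons hadj p, by simp [hp]⟩
  intro u v
  obtain ⟨p, hp⟩ := key _ u v rfl
  have hle : ((Qcube n).induce D).dist u v ≤ hammingDist (u : Fin n → Bool) v := by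
    rw [← hp]; exact SimpleGraph.dist_le p
  have hreach : ((Qcube n).induce D).Reachable u v := ⟨p⟩
  obtain ⟨q, hq⟩ := hreach.exists_walk_length_eq_dist
  have := walk_len q
  omega
end

section
/- Let G be a finite simple graph and P an odd-length handle of G (a path whose internal vertices have degree 2 in G) with at least 3 edges. Then P is M-alternating for every perfect matching M of G: along P, edges belong to M and do not belong to M alternately. -/
/-- An odd-length handle P = v₀v₁…v_{2k+1} (k ≥ 1, so at least 3
edges; internal vertices have degree 2 in G) is M-alternating for every perfect
matching M of G: consecutive edges of P alternate between lying in M and not. -/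
theorem stmt10 {V : Type*} [Fintype V] (G : SimpleGraph V) [DecidableRel G.Adj]
    (k : ℕ) (hk : 1 ≤ k) (v : ℕ → V)
    (hinj : ∀ i j, i ≤ 2 * k + 1 → j ≤ 2 * k + 1 → v i = v j → i = j)
    (hadj : ∀ i, i < 2 * k + 1 → G.Adj (v i) (v (i + 1)))
    (hdeg : ∀ i, 0 < i → i < 2 * k + 1 → G.degree (v i) = 2)
    (M : G.Subgraph) (hM : M.IsPerfectMatching) :
    ∀ i, i + 1 < 2 * k + 1 →
      (s(v i, v (i + 1)) ∈ M.edgeSet ↔ s(v (i + 1), v (i + 2)) ∉ M.edgeSet) := by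
  classical
  intro i hi
  have hi1 : i + 1 ≤ 2 * k + 1 := le_of_lt hi
  have hi2 : i + 2 ≤ 2 * k + 1 := hi
  have hi0 : i ≤ 2 * k + 1 := by omega
  have hne : v i ≠ v (i + 2) := fun h => by
    have := hinj i (i + 2) hi0 hi2 h; omega
  obtain ⟨hmatch, hspan⟩ := hM
  obtain ⟨w, hw, huniq⟩ := hmatch (hspan (v (i + 1)))
  -- the two G-neighbors of v (i+1)
  have ha1 : G.Adj (v (i + 1)) (v i) := (hadj i (by omega)).symm
  have ha2 : G.Adj (v (i + 1)) (v (i + 2)) := hadj (i + 1) (by omega)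
  have hdeg' : (G.neighborFinset (v (i + 1))).card = 2 := hdeg (i + 1) (by omega) hi
  have hsub : ({v i, v (i + 2)} : Finset V) ⊆ G.neighborFinset (v (i + 1)) := by
    intro x hx
    simp only [Finset.mem_insert, Finset.mem_singleton] at hx
    rcases hx with rfl | rfl
    · exact (SimpleGraph.mem_neighborFinset _ _ _).2 ha1
    · exact (SimpleGraph.mem_neighborFinset _ _ _).2 ha2
  have hcard : ({v i, v (i + 2)} : Finset V).card = 2 := by
    rw [Finset.card_insert_of_notMem (by simpa using hne), Finset.card_singleton]
  have hset : G.neighborFinset (v (i + 1)) = {v i, v (i + 2)} :=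
    (Finset.eq_of_subset_of_card_le hsub (by omega)).symm
  -- w is one of the two neighbors
  have hwmem : w ∈ G.neighborFinset (v (i + 1)) :=
    (SimpleGraph.mem_neighborFinset _ _ _).2 (M.adj_sub hw)
  rw [hset] at hwmem
  simp only [Finset.mem_insert, Finset.mem_singleton] at hwmem
  simp only [SimpleGraph.Subgraph.mem_edgeSet]
  constructor
  · intro h1 h2
    have e1 : v i = w := huniq (v i) h1.symm
    have e2 : v (i + 2) = w := huniq (v (i + 2)) h2
    exact hne (e1.trans e2.symm)
  · intro h2
    rcases hwmem with rfl | rfl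
    · exact hw.symm
    · exact absurd hw h2
end
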